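/- Let X be a poset, let A ⊆ X be a countably infinite antichain, and let C ⊆ X be a chain of order type ω (i.e., C = {c_0 < c_1 < c_2 < ...}). Assume c ≰ a for all a ∈ A and c ∈ C. Then A ∪ C contains a subset (with the induced order) that is order-isomorphic to F_1, to F_4, or to F_7. -/

import Mathlib

/-- An order embedding induces an order isomorphism onto its range. -/
noncomputable def OrderEmbedding.rangeOrderIso {α β : Type*} [Preorder α] [Preorder β]
    (f : α ↪o β) : α ≃o Set.range f :=
  { Equiv.ofInjective f f.injective with
    map_rel_iff' := by intro a b; exact f.map_rel_iff }

/-- `D_∞`, the countably infinite antichain. -/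
def Dinf : Type := ℕ

instance : PartialOrder Dinf where
  le a b := a = b
  le_refl _ := rfl
  le_trans _ _ _ h₁ h₂ := Eq.trans h₁ h₂
  le_antisymm _ _ h _ := h

/-- `F₁ = D_∞ ⊔ ω`. -/
abbrev F1 : Type := Dinf ⊕ ℕ

/-- `F₄ = D_∞ ⊕ ω`. -/
abbrev F4 : Type := Dinf ⊕ₗ ℕ

/-- `F₇`: a chain `c₀ < c₁ < ⋯` (encoded `Sum.inr i = cᵢ`) together with pairwise
incomparable elements `a₁, a₂, …` (encoded `Sum.inl j = a_{j+1}`), where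
`a_j < c_i` iff `i ≥ j`, and no other comparabilities. -/
def F7 : Type := ℕ ⊕ ℕ

/-- The order relation of `F₇`: `a_{j+1} ≤ cᵢ` iff `i ≥ j + 1`. -/
def F7.le : F7 → F7 → Prop
  | Sum.inl j, Sum.inl j' => j = j'
  | Sum.inl j, Sum.inr i => j + 1 ≤ i
  | Sum.inr _, Sum.inl _ => False
  | Sum.inr i, Sum.inr i' => i ≤ i'

theorem F7.le_refl (x : F7) : F7.le x x := by cases x <;> simp [F7.le]
theorem F7.le_trans (x y z : F7) : F7.le x y → F7.le y z → F7.le x z := by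
  cases x <;> cases y <;> cases z <;> simp [F7.le] <;> omega
theorem F7.le_antisymm (x y : F7) : F7.le x y → F7.le y x → x = y := by
  cases x <;> cases y <;> simp [F7.le] <;> intro h h' <;> exact congrArg _ (by omega)

instance : PartialOrder F7 where
  le := F7.le
  le_refl := F7.le_refl
  le_trans := F7.le_trans
  le_antisymm := F7.le_antisymm

/-- Lemma: if `A` is a countably infinite antichain and `C = {c₀ < c₁ < ⋯}` a chain of
order type `ω` with `c ≰ a` for all `a ∈ A`, `c ∈ C`, then `A ∪ C` contains a subset
isomorphic to `F₁`, `F₄` or `F₇`. -/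
theorem antichain_chain_contains_copy {X : Type*} [PartialOrder X]
    (A : Set X) (hAinf : A.Infinite) (hAcount : A.Countable)
    (hA : IsAntichain (· ≤ ·) A)
    (c : ℕ → X) (hc : StrictMono c)
    (hCA : ∀ a ∈ A, ∀ n : ℕ, ¬ c n ≤ a) :
    ∃ S : Set X, S ⊆ A ∪ Set.range c ∧
      (Nonempty (F1 ≃o ↥S) ∨ Nonempty (F4 ≃o ↥S) ∨ Nonempty (F7 ≃o ↥S)) := by
  classical
  by_cases hB : {a ∈ A | ∀ n : ℕ, ¬ a ≤ c n}.Infinite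
  · -- Case F1 : infinitely many elements of A are incomparable with all of C
    set B : Set X := {a ∈ A | ∀ n : ℕ, ¬ a ≤ c n} with hBdef
    have hBc : B.Countable := hAcount.mono (fun a ha => ha.1)
    haveI := hB.to_subtype
    haveI := hBc.to_subtype
    obtain ⟨e⟩ : Nonempty (ℕ ≃ B) := nonempty_equiv_of_countable
    set f : F1 → X := Sum.elim (fun d : Dinf => (e d : X)) c with hf
    have hiff : ∀ x y : F1, f x ≤ f y ↔ x ≤ y := by
      rintro (d | n) (d' | n')
      · rw [Sum.inl_le_inl_iff]
        show (e d : X) ≤ (e d' : X) ↔ d = d'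
        constructor
        · intro h
          by_contra hne
          exact hA (e d).2.1 (e d').2.1
            (fun heq => hne (e.injective (Subtype.ext heq))) h
        · intro h; exact le_of_eq (congrArg (fun t => (e t : X)) h)
      · exact iff_of_false ((e d).2.2 n') Sum.not_inl_le_inr
      · exact iff_of_false (hCA (e d') (e d').2.1 n) Sum.not_inr_le_inl
      · rw [Sum.inr_le_inr_iff]
        exact hc.le_iff_le
    let emb : F1 ↪o X := OrderEmbedding.ofMapLEIff f hiff
    refine ⟨Set.range emb, ?_, Or.inl ⟨emb.rangeOrderIso⟩⟩
    rintro x ⟨p, rfl⟩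
    rcases p with d | n
    · exact Or.inl (e d).2.1
    · exact Or.inr ⟨n, rfl⟩
  · have hBfin : {a ∈ A | ∀ n : ℕ, ¬ a ≤ c n}.Finite := Set.not_infinite.mp hB
    have hA'inf : {a ∈ A | ∃ n, a ≤ c n}.Infinite := by
      refine (hAinf.diff hBfin).mono ?_
      intro a ha
      refine ⟨ha.1, ?_⟩
      by_contra h
      push_neg at h
      exact ha.2 ⟨ha.1, h⟩
    by_cases h2 : ∃ n, {a ∈ A | a ≤ c n}.Infinite
    · -- Case F4 : some cₙ lies above infinitely many elements of A
      obtain ⟨n, hn⟩ := h2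
      have hcnt : {a ∈ A | a ≤ c n}.Countable := hAcount.mono (fun a ha => ha.1)
      haveI := hn.to_subtype
      haveI := hcnt.to_subtype
      obtain ⟨e⟩ : Nonempty (ℕ ≃ {a ∈ A | a ≤ c n}) := nonempty_equiv_of_countable
      set g : Dinf ⊕ ℕ → X := Sum.elim (fun d : Dinf => (e d : X)) (fun m => c (n + m)) with hg
      set f : F4 → X := fun x => g (ofLex x) with hf
      have hiff : ∀ x y : F4, f x ≤ f y ↔ x ≤ y := by
        intro x y
        obtain ⟨p, rfl⟩ : ∃ p, toLex p = x := ⟨ofLex x, rfl⟩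
        obtain ⟨q, rfl⟩ : ∃ q, toLex q = y := ⟨ofLex y, rfl⟩
        rcases p with d | m <;> rcases q with d' | m'
        · rw [Sum.Lex.inl_le_inl_iff]
          show (e d : X) ≤ (e d' : X) ↔ d = d'
          constructor
          · intro h
            by_contra hne
            exact hA (e d).2.1 (e d').2.1
              (fun heq => hne (e.injective (Subtype.ext heq))) h
          · intro h; exact le_of_eq (congrArg (fun t => (e t : X)) h)
        · exact iff_of_true ((e d).2.2.trans (hc.monotone (Nat.le_add_right n m')))
            (Sum.Lex.inl_le_inr d m')
        · exact iff_of_false (hCA (e d') (e d').2.1 (n + m)) Sum.Lex.not_inr_le_inl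
        · rw [Sum.Lex.inr_le_inr_iff]
          show c (n + m) ≤ c (n + m') ↔ m ≤ m'
          rw [hc.le_iff_le]
          omega
      let emb : F4 ↪o X := OrderEmbedding.ofMapLEIff f hiff
      refine ⟨Set.range emb, ?_, Or.inr (Or.inl ⟨emb.rangeOrderIso⟩)⟩
      rintro x ⟨p, rfl⟩
      obtain ⟨q, rfl⟩ : ∃ q, toLex q = p := ⟨ofLex p, rfl⟩
      rcases q with d | m
      · exact Or.inl (e d).2.1
      · exact Or.inr ⟨n + m, rfl⟩
    · -- Case F7
      push_neg at h2
      have hfin : ∀ m : ℕ, {a ∈ A | a ≤ c m}.Finite := fun m => h2 m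
      have key : ∀ m : ℕ, ∃ a : {a : X // a ∈ A ∧ ∃ k, a ≤ c k}, ¬ a.1 ≤ c m := by
        intro m
        obtain ⟨a, ha⟩ := (hA'inf.diff (hfin m)).nonempty
        exact ⟨⟨a, ha.1.1, ha.1.2⟩, fun h => ha.2 ⟨ha.1.1, h⟩⟩
      set T := {a : X // a ∈ A ∧ ∃ k, a ≤ c k} with hT
      let idx : T → ℕ := fun a => Nat.find a.2.2
      have hidx_le : ∀ (a : T) (m : ℕ), a.1 ≤ c m ↔ idx a ≤ m := by
        intro a m
        constructor
        · intro h
          by_contra hlt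
          push_neg at hlt
          exact Nat.find_min a.2.2 hlt h
        · intro h
          exact (Nat.find_spec a.2.2).trans (hc.monotone h)
      let seq : ℕ → T := fun k => Nat.rec (Classical.choose (key 0))
        (fun _ prev => Classical.choose (key (idx prev))) k
      have hseq0 : ¬ (seq 0).1 ≤ c 0 := Classical.choose_spec (key 0)
      have hseqS : ∀ k, ¬ (seq (k+1)).1 ≤ c (idx (seq k)) :=
        fun k => Classical.choose_spec (key (idx (seq k)))
      have hidx0 : 1 ≤ idx (seq 0) := by
        by_contra h
        push_neg at h
        exact hseq0 ((hidx_le (seq 0) 0).2 (by omega))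
      have hidxS : ∀ k, idx (seq k) < idx (seq (k+1)) := by
        intro k
        by_contra h
        push_neg at h
        exact hseqS k ((hidx_le _ _).2 h)
      have hmono : StrictMono (fun k => idx (seq k)) := strictMono_nat_of_lt_succ hidxS
      let M : ℕ → ℕ := fun i => Nat.rec 0 (fun i' _ => idx (seq i')) i
      have hM : StrictMono M := by
        refine strictMono_nat_of_lt_succ ?_
        intro i
        cases i with
        | zero => exact hidx0
        | succ i' => exact hidxS i'
      set f : F7 → X := Sum.elim (fun j => (seq j).1) (fun i => c (M i)) with hfdef
      have hiff : ∀ x y : F7, f x ≤ f y ↔ x ≤ y := by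
        rintro (j | i) (j' | i')
        · show (seq j).1 ≤ (seq j').1 ↔ F7.le (Sum.inl j) (Sum.inl j')
          simp only [F7.le]
          constructor
          · intro h
            by_contra hne
            refine hA (seq j).2.1 (seq j').2.1 (fun heq => hne ?_) h
            exact hmono.injective (congrArg idx (Subtype.ext heq))
          · rintro rfl
            exact le_rfl
        · show (seq j).1 ≤ c (M i') ↔ F7.le (Sum.inl j) (Sum.inr i')
          rw [hidx_le]
          simp only [F7.le]
          cases i' with
          | zero =>
            have h1 : 1 ≤ idx (seq 0) := hidx0
            have h2 : idx (seq 0) ≤ idx (seq j) := hmono.monotone (Nat.zero_le j)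
            show idx (seq j) ≤ 0 ↔ j + 1 ≤ 0
            omega
          | succ i'' =>
            show idx (seq j) ≤ idx (seq i'') ↔ j + 1 ≤ i'' + 1
            refine hmono.le_iff_le.trans ?_
            omega
        · exact iff_of_false (hCA (seq j').1 (seq j').2.1 (M i)) (fun h => h)
        · show c (M i) ≤ c (M i') ↔ F7.le (Sum.inr i) (Sum.inr i')
          rw [hc.le_iff_le, hM.le_iff_le]
          exact Iff.rfl
      let emb : F7 ↪o X := OrderEmbedding.ofMapLEIff f hiff
      refine ⟨Set.range emb, ?_, Or.inr (Or.inr ⟨emb.rangeOrderIso⟩)⟩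
      rintro x ⟨p, rfl⟩
      rcases p with j | i
      · exact Or.inl (seq j).2.1
      · exact Or.inr ⟨M i, rfl⟩
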